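/- With Λ totally ordered, D a basic subset of Φ, Γ and Ω and Γ₁ = Γ ∪ Ω as defined, the pattern subgroup H = M(Γ) is a normal subgroup of I = M(Γ₁), and if R is finite then [I : H] = |R|^{|Ω|}. -/

import Mathlib

namespace McLain

/-- The endomorphism ring of the free right `R`-module on `Λ`. -/
abbrev E (R : Type*) [Ring R] (Λ : Type*) := Module.End Rᵐᵒᵖ (Λ →₀ R)

/-- Left multiplication by `r`, as an endomorphism of the right `R`-module `R`. -/
def lmul {R : Type*} [Ring R] (r : R) : R →ₗ[Rᵐᵒᵖ] R where
  toFun s := r * s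
  map_add' := fun a b => mul_add r a b
  map_smul' := fun m s => by
    simp [MulOpposite.smul_eq_mul_unop, mul_assoc]

/-- The endomorphism corresponding to `r e_{αβ}`. -/
noncomputable def elt {R : Type*} [Ring R] {Λ : Type*} (α β : Λ) (r : R) : E R Λ :=
  (Finsupp.lsingle α).comp ((lmul r).comp (Finsupp.lapply β))

/-- The unit `1 + r e_{αβ}` of `E`, for `α < β` (its inverse is `1 - r e_{αβ}`). -/
noncomputable def rootUnit {R : Type*} [Ring R] {Λ : Type*} [PartialOrder Λ]
    {α β : Λ} (h : α < β) (r : R) : (E R Λ)ˣ where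
  val := 1 + elt α β r
  inv := 1 + elt α β (-r)
  val_inv := by
    apply LinearMap.ext; intro x
    simp [elt, lmul, Module.End.mul_apply, Finsupp.single_apply, h.ne, mul_add, add_assoc]
  inv_val := by
    apply LinearMap.ext; intro x
    simp [elt, lmul, Module.End.mul_apply, Finsupp.single_apply, h.ne, mul_add, add_assoc]

/-- The pattern subgroup `M(Γ) = ⟨M_{αβ} : (α,β) ∈ Γ⟩`. -/
noncomputable def patternSubgroup (R : Type*) [Ring R] (Λ : Type*) [PartialOrder Λ]
    (Γ : Set (Λ × Λ)) : Subgroup (E R Λ)ˣ :=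
  Subgroup.closure {u | ∃ (α β : Λ) (h : α < β), (α, β) ∈ Γ ∧ ∃ r : R, u = rootUnit h r}


section
set_option linter.unusedSectionVars false

variable {R : Type*} [Ring R] {Λ : Type*} [DecidableEq Λ]

/-- matrix entry -/
noncomputable def ent (f : E R Λ) (a b : Λ) : R := f (Finsupp.single b 1) a

lemma single_eq_smul (c : R) (b : Λ) :
    (Finsupp.single b c : Λ →₀ R) = (MulOpposite.op c) • (Finsupp.single b 1 : Λ →₀ R) := by
  rw [Finsupp.smul_single]
  simp [MulOpposite.smul_eq_mul_unop]

lemma apply_single (f : E R Λ) (b : Λ) (c : R) (a : Λ) :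
    f (Finsupp.single b c) a = ent f a b * c := by
  rw [single_eq_smul, map_smul]
  simp [ent, MulOpposite.smul_eq_mul_unop]

lemma apply_eq (f : E R Λ) (x : Λ →₀ R) (a : Λ) :
    f x a = ∑ b ∈ x.support, ent f a b * x b := by
  conv_lhs => rw [← Finsupp.sum_single x]
  rw [Finsupp.sum, map_sum]
  rw [Finsupp.finset_sum_apply]
  exact Finset.sum_congr rfl fun b _ => apply_single f b (x b) a

lemma ent_mul (f g : E R Λ) (a c : Λ) :
    ent (f * g) a c = ∑ b ∈ (g (Finsupp.single c 1)).support, ent f a b * ent g b c := by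
  rw [ent, Module.End.mul_apply, apply_eq]; rfl

lemma ent_add (f g : E R Λ) (a b : Λ) : ent (f + g) a b = ent f a b + ent g a b := rfl

lemma ent_sub (f g : E R Λ) (a b : Λ) : ent (f - g) a b = ent f a b - ent g a b := rfl

lemma ent_zero (a b : Λ) : ent (0 : E R Λ) a b = 0 := rfl

lemma ent_one (a b : Λ) : ent (1 : E R Λ) a b = if a = b then 1 else 0 := by
  simp [ent, Module.End.one_apply, Finsupp.single_apply, eq_comm]

lemma ent_elt (α β : Λ) (r : R) (a b : Λ) :
    ent (elt α β r) a b = if a = α ∧ b = β then r else 0 := by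
  simp only [ent, elt, LinearMap.comp_apply, Finsupp.lapply_apply, Finsupp.lsingle_apply]
  by_cases hb : b = β
  · subst hb
    simp [lmul, Finsupp.single_apply, eq_comm]
  · simp [Finsupp.single_apply, hb, Ne.symm hb, lmul]

lemma ext_ent {f g : E R Λ} (h : ∀ a b, ent f a b = ent g a b) : f = g := by
  apply LinearMap.ext; intro x
  ext a
  rw [apply_eq, apply_eq]
  exact Finset.sum_congr rfl fun b _ => by rw [h]

lemma eq_zero_of_ent {f : E R Λ} (h : ∀ a b, ent f a b = 0) : f = 0 :=
  ext_ent fun a b => by rw [h, ent_zero]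


end

section
set_option linter.unusedSectionVars false

variable {R : Type*} [Ring R] {Λ : Type*} [DecidableEq Λ]

/-- support of an endomorphism -/
def msupp (f : E R Λ) : Set (Λ × Λ) := {p | ent f p.1 p.2 ≠ 0}

def comp (S T : Set (Λ × Λ)) : Set (Λ × Λ) := {p | ∃ b, (p.1, b) ∈ S ∧ (b, p.2) ∈ T}

lemma msupp_mul (f g : E R Λ) : msupp (f * g) ⊆ comp (msupp f) (msupp g) := by
  rintro ⟨a, c⟩ h
  simp only [msupp, Set.mem_setOf_eq, ent_mul] at h
  obtain ⟨b, -, hb⟩ := Finset.exists_ne_zero_of_sum_ne_zero h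
  exact ⟨b, fun h0 => hb (by simp [h0]), fun h0 => hb (by simp [h0])⟩

lemma comp_finite {S T : Set (Λ × Λ)} (hS : S.Finite) (hT : T.Finite) :
    (comp S T).Finite := by
  have : comp S T ⊆ (fun q : (Λ × Λ) × (Λ × Λ) => (q.1.1, q.2.2)) '' (S ×ˢ T) := by
    rintro ⟨a, c⟩ ⟨b, h1, h2⟩
    exact ⟨((a, b), (b, c)), ⟨h1, h2⟩, rfl⟩
  exact Set.Finite.subset ((hS.prod hT).image _) this

lemma msupp_add (f g : E R Λ) : msupp (f + g) ⊆ msupp f ∪ msupp g := by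
  rintro ⟨a, b⟩ h
  simp only [msupp, Set.mem_setOf_eq, ent_add] at h
  by_contra hc
  simp only [Set.mem_union, msupp, Set.mem_setOf_eq, not_or, not_not] at hc
  rw [hc.1, hc.2, add_zero] at h; exact h rfl

lemma msupp_elt (α β : Λ) (r : R) : msupp (elt α β r) ⊆ {(α, β)} := by
  rintro ⟨a, b⟩ h
  simp only [msupp, Set.mem_setOf_eq, ent_elt] at h
  split_ifs at h with hab
  · simp [hab.1, hab.2, Prod.ext_iff]
  · exact absurd rfl h

/-- supported and finitely supported on S -/
def Pat (S : Set (Λ × Λ)) (f : E R Λ) : Prop := msupp f ⊆ S ∧ (msupp f).Finite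

lemma Pat.add {S : Set (Λ × Λ)} {f g : E R Λ} (hf : Pat S f) (hg : Pat S g) :
    Pat S (f + g) :=
  ⟨(msupp_add f g).trans (Set.union_subset hf.1 hg.1),
   ((hf.2.union hg.2).subset (msupp_add f g))⟩

lemma Pat.mul {S T U : Set (Λ × Λ)} {f g : E R Λ} (hf : Pat S f) (hg : Pat T g)
    (hST : comp S T ⊆ U) : Pat U (f * g) := by
  refine ⟨(msupp_mul f g).trans ?_, (comp_finite hf.2 hg.2).subset (msupp_mul f g)⟩
  refine Set.Subset.trans (fun p hp => ?_) hST
  obtain ⟨b, h1, h2⟩ := hp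
  exact ⟨b, hf.1 h1, hg.1 h2⟩

lemma Pat.mono {S T : Set (Λ × Λ)} (h : S ⊆ T) {f : E R Λ} (hf : Pat S f) : Pat T f :=
  ⟨hf.1.trans h, hf.2⟩

lemma Pat.zero (S : Set (Λ × Λ)) : Pat S (0 : E R Λ) := by
  constructor
  · rintro ⟨a, b⟩ h; exact absurd (ent_zero a b) h
  · refine Set.Finite.subset (Set.finite_empty) ?_
    rintro ⟨a, b⟩ h; exact absurd (ent_zero a b) h

lemma Pat.elt {S : Set (Λ × Λ)} {α β : Λ} (h : (α, β) ∈ S) (r : R) :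
    Pat S (elt α β r) :=
  ⟨(msupp_elt α β r).trans (by simpa using h), (Set.finite_singleton _).subset (msupp_elt α β r)⟩



variable {R : Type*} [Ring R] {Λ : Type*} [DecidableEq Λ] [PartialOrder Λ]

lemma rootUnit_val {α β : Λ} (h : α < β) (r : R) :
    ((rootUnit h r : (E R Λ)ˣ) : E R Λ) = 1 + elt α β r := rfl

lemma rootUnit_inv {α β : Λ} (h : α < β) (r : R) :
    (rootUnit h r)⁻¹ = rootUnit h (-r) := by
  ext
  rfl

lemma rootUnit_mem {S : Set (Λ × Λ)} {α β : Λ} (h : α < β) (hS : (α, β) ∈ S) (r : R) :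
    rootUnit h r ∈ patternSubgroup R Λ S :=
  Subgroup.subset_closure ⟨α, β, h, hS, r, rfl⟩

/-- The two-sided support condition for a unit. -/
def UPat (S : Set (Λ × Λ)) (u : (E R Λ)ˣ) : Prop := Pat S ((u : E R Λ) - 1)

lemma mul_sub_one' (x y : E R Λ) : x * y - 1 = (x - 1) + (y - 1) + (x - 1) * (y - 1) := by
  apply LinearMap.ext; intro v
  simp only [LinearMap.sub_apply, LinearMap.add_apply, Module.End.mul_apply, Module.End.one_apply,
    map_sub]
  abel

lemma one_add_sub_one (f : E R Λ) : (1 + f) - 1 = f := by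
  apply LinearMap.ext; intro v
  simp only [LinearMap.sub_apply, LinearMap.add_apply, Module.End.one_apply]
  abel

lemma UPat.mul {S : Set (Λ × Λ)} (hS : comp S S ⊆ S) {u v : (E R Λ)ˣ}
    (hu : UPat S u) (hv : UPat S v) : UPat S (u * v) := by
  unfold UPat at *
  rw [Units.val_mul, mul_sub_one']
  exact (hu.add hv).add (hu.mul hv hS)

/-- Membership in the pattern subgroup gives two-sided support. -/
lemma pattern_supp {S : Set (Λ × Λ)} (hS : comp S S ⊆ S)
    {u : (E R Λ)ˣ} (hu : u ∈ patternSubgroup R Λ S) : UPat S u ∧ UPat S u⁻¹ := by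
  induction hu using Subgroup.closure_induction with
  | mem x hx =>
      obtain ⟨α, β, h, hmem, r, rfl⟩ := hx
      constructor
      · unfold UPat
        rw [rootUnit_val, one_add_sub_one]
        exact Pat.elt hmem r
      · unfold UPat
        rw [rootUnit_inv, rootUnit_val, one_add_sub_one]
        exact Pat.elt hmem (-r)
  | one =>
      constructor <;>
        · unfold UPat
          have h1 : ((1 : (E R Λ)ˣ) : E R Λ) - 1 = 0 := by
            apply LinearMap.ext; intro v
            simp only [Units.val_one, LinearMap.sub_apply, Module.End.one_apply, LinearMap.zero_apply]
            abel
          simp only [inv_one, h1]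
          exact Pat.zero S
  | mul x y hx hy ihx ihy =>
      refine ⟨ihx.1.mul hS ihy.1, ?_⟩
      rw [mul_inv_rev]
      exact ihy.2.mul hS ihx.2
  | inv x hx ih => exact ⟨ih.2, by simpa using ih.1⟩


end

section
set_option linter.unusedSectionVars false

variable {R : Type*} [Ring R] {Λ : Type*} [DecidableEq Λ] [LinearOrder Λ]

lemma ent_mul_elt (f : E R Λ) (α β : Λ) (s : R) (a b : Λ) :
    ent (f * elt α β s) a b = if b = β then ent f a α * s else 0 := by
  rw [show ent (f * elt α β s) a b = (f ((elt α β s) (Finsupp.single b 1))) a from rfl]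
  have h : (elt α β s) (Finsupp.single b 1) = Finsupp.single α (if b = β then s else 0) := by
    simp only [elt, LinearMap.comp_apply, Finsupp.lapply_apply, Finsupp.lsingle_apply, lmul,
      LinearMap.coe_mk, AddHom.coe_mk, Finsupp.single_apply]
    split_ifs with hb
    · simp [hb]
    · simp [Ne.symm hb]
  rw [h]
  split_ifs with hb
  · rw [apply_single]
  · rw [apply_single]; simp

lemma elt_neg (α β : Λ) (r : R) : elt α β (-r) = - elt α β r := by
  apply LinearMap.ext; intro w
  simp [elt, lmul, neg_mul]

lemma eliminate_aux {S : Set (Λ × Λ)} (hS : ∀ p ∈ S, p.1 < p.2) :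
    ∀ (n : ℕ) (u : (E R Λ)ˣ) (h2 : (msupp ((u : E R Λ) - 1)).Finite),
      h2.toFinset.card ≤ n → msupp ((u : E R Λ) - 1) ⊆ S →
      u ∈ patternSubgroup R Λ S := by
  intro n
  induction n with
  | zero =>
      intro u h2 hcard _
      have hemp : msupp ((u : E R Λ) - 1) = ∅ := by
        have := Finset.card_eq_zero.mp (Nat.le_zero.mp hcard)
        rw [← h2.toFinset_eq_empty]
        exact this
      have hN : (u : E R Λ) - 1 = 0 := eq_zero_of_ent fun a b => by
        by_contra h
        exact absurd (show ((a, b) : Λ × Λ) ∈ msupp ((u : E R Λ) - 1) from h)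
          (by rw [hemp]; simp)
      have hone : (u : E R Λ) = 1 := by
        apply LinearMap.ext; intro w
        have hw := LinearMap.congr_fun hN w
        simp only [LinearMap.sub_apply, Module.End.one_apply, LinearMap.zero_apply] at hw
        simpa [Module.End.one_apply] using sub_eq_zero.mp hw
      rw [Units.val_eq_one.mp hone]
      exact Subgroup.one_mem _
  | succ n ih =>
      intro u h2 hcard hsub
      set N : E R Λ := (u : E R Λ) - 1 with hNdef
      rcases Finset.eq_empty_or_nonempty h2.toFinset with hemp | hne
      · exact ih u h2 (by rw [hemp]; simp) hsub
      · have hBne : (h2.toFinset.image Prod.snd).Nonempty := hne.image _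
        obtain ⟨⟨α, β⟩, hpF, hp2⟩ :=
          Finset.mem_image.mp ((h2.toFinset.image Prod.snd).max'_mem hBne)
        have hpm : ((α, β) : Λ × Λ) ∈ msupp N := h2.mem_toFinset.mp hpF
        set r := ent N α β with hr
        have hrne : r ≠ 0 := hpm
        have hmemS : (α, β) ∈ S := hsub hpm
        have hlt : α < β := hS _ hmemS
        have hmax : ∀ q ∈ msupp N, q.2 ≤ β := by
          intro q hq
          have : β = (h2.toFinset.image Prod.snd).max' hBne := hp2
          rw [this]
          exact Finset.le_max' _ _ (Finset.mem_image_of_mem _ (h2.mem_toFinset.mpr hq))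
        have hzero : elt α β (-r) * N = 0 := by
          apply eq_zero_of_ent
          intro a b
          rw [ent_mul]
          apply Finset.sum_eq_zero
          intro m _
          rcases eq_or_ne m β with hm | hm
          · have hz : ent N m b = 0 := by
              by_contra h
              have hmem : ((m, b) : Λ × Λ) ∈ msupp N := h
              have hlt1 : m < b := hS _ (hsub hmem)
              have hle1 : b ≤ β := hmax _ hmem
              rw [hm] at hlt1
              exact absurd hlt1 (not_lt.mpr hle1)
            rw [hz, mul_zero]
          · rw [ent_elt]
            simp [hm]
        set v := (rootUnit hlt r)⁻¹ * u with hv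
        have hval : (v : E R Λ) = (1 + elt α β (-r)) * (u : E R Λ) := by
          rw [hv, Units.val_mul, rootUnit_inv, rootUnit_val]
        have hvN : (v : E R Λ) - 1 = N - elt α β r := by
          rw [hval]
          apply LinearMap.ext; intro w
          have h0 : elt α β (-r) ((u : E R Λ) w - w) = 0 := by
            have h00 := LinearMap.congr_fun hzero w
            simpa only [hNdef, Module.End.mul_apply, LinearMap.sub_apply, Module.End.one_apply,
              LinearMap.zero_apply] using h00
          have h0' : elt α β (-r) ((u : E R Λ) w) = elt α β (-r) w :=
            sub_eq_zero.mp (by rw [← map_sub]; exact h0)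
          simp only [hNdef, LinearMap.sub_apply, Module.End.mul_apply, LinearMap.add_apply,
            Module.End.one_apply]
          rw [h0', elt_neg]
          simp only [LinearMap.neg_apply]
          abel
        have hsubv : msupp ((v : E R Λ) - 1) ⊆ msupp N \ {(α, β)} := by
          rintro ⟨a, b⟩ hab
          rw [hvN] at hab
          have he : ent (N - elt α β r) a b = ent N a b - (if a = α ∧ b = β then r else 0) := by
            rw [ent_sub, ent_elt]
          by_cases hq : a = α ∧ b = β
          · exfalso
            apply hab
            show ent (N - elt α β r) a b = 0
            rw [he, if_pos hq, hq.1, hq.2, ← hr, sub_self]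
          · have hent : ent (N - elt α β r) a b = ent N a b := by
              rw [he, if_neg hq, sub_zero]
            refine ⟨?_, ?_⟩
            · show ent N a b ≠ 0
              rw [← hent]; exact hab
            · simp only [Set.mem_singleton_iff]
              intro hcon
              rw [Prod.ext_iff] at hcon
              exact hq ⟨hcon.1, hcon.2⟩
        have h2v : (msupp ((v : E R Λ) - 1)).Finite :=
          h2.subset (hsubv.trans Set.diff_subset)
        have hfsub : h2v.toFinset ⊆ h2.toFinset.erase (α, β) := by
          intro q hq
          have hq' := hsubv (h2v.mem_toFinset.mp hq)
          rw [Finset.mem_erase]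
          exact ⟨by simpa using hq'.2, h2.mem_toFinset.mpr hq'.1⟩
        have hcardv : h2v.toFinset.card ≤ n := by
          have hc1 := Finset.card_le_card hfsub
          have hc2 := Finset.card_erase_of_mem (h2.mem_toFinset.mpr hpm)
          omega
        have hmemv := ih v h2v hcardv ((hsubv.trans Set.diff_subset).trans hsub)
        have hu : u = rootUnit hlt r * v := by rw [hv, mul_inv_cancel_left]
        rw [hu]
        exact Subgroup.mul_mem _ (rootUnit_mem hlt hmemS r) hmemv

lemma eliminate {S : Set (Λ × Λ)} (hS : ∀ p ∈ S, p.1 < p.2) (u : (E R Λ)ˣ)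
    (hfin : (msupp ((u : E R Λ) - 1)).Finite) (hsub : msupp ((u : E R Λ) - 1) ⊆ S) :
    u ∈ patternSubgroup R Λ S :=
  eliminate_aux hS hfin.toFinset.card u hfin le_rfl hsub

/-- Characterization of pattern subgroups for transitive patterns. -/
lemma pattern_iff {S : Set (Λ × Λ)} (hS : ∀ p ∈ S, p.1 < p.2) (hTr : comp S S ⊆ S)
    (u : (E R Λ)ˣ) :
    u ∈ patternSubgroup R Λ S ↔ Pat S ((u : E R Λ) - 1) :=
  ⟨fun h => (pattern_supp hTr h).1, fun h => eliminate hS u h.2 h.1⟩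


end

section
set_option linter.unusedSectionVars false

variable {R : Type*} [Ring R] {Λ : Type*} [DecidableEq Λ] [LinearOrder Λ]

lemma conj_sub_one (x y z : E R Λ) (hxz : x * z = 1) :
    x * y * z - 1 = (y - 1) + (x - 1) * (y - 1) + (y - 1) * (z - 1)
      + (x - 1) * ((y - 1) * (z - 1)) := by
  apply LinearMap.ext; intro w
  have hw : x (z w) = w := by
    have := LinearMap.congr_fun hxz w
    simpa [Module.End.mul_apply, Module.End.one_apply] using this
  simp only [LinearMap.sub_apply, LinearMap.add_apply, Module.End.mul_apply, Module.End.one_apply,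
    map_sub, map_add, hw]
  abel

lemma inv_mul_sub_one (c x y : E R Λ) (hcx : c * x = 1) :
    c * y - 1 = (y - x) + (c - 1) * (y - x) := by
  apply LinearMap.ext; intro w
  have hw : c (x w) = w := by
    have := LinearMap.congr_fun hcx w
    simpa [Module.End.mul_apply, Module.End.one_apply] using this
  simp only [LinearMap.sub_apply, LinearMap.add_apply, Module.End.mul_apply, Module.End.one_apply,
    map_sub, map_add, hw]
  abel


end

set_option maxHeartbeats 2000000 in
/-- Let `Λ` be totally ordered, `D` a basic subset of `Φ`, and let
`Γ = Φ \ ⋃_{(α,β) ∈ D} [α,→,β)`, `Ω = {(α,γ) : ∃ (α,β),(γ,δ) ∈ D, α < γ < β < δ}`,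
`Γ₁ = Γ ∪ Ω`.  Then `H = M(Γ)` is a normal subgroup of `I = M(Γ₁)`, and if `R` is
finite then `[I : H] = |R|^{|Ω|}`. -/
theorem patternSubgroup_normal_and_index (R : Type*) [Ring R] [Nontrivial R]
    (Λ : Type*) [LinearOrder Λ] (D : Finset (Λ × Λ))
    (hD : ∀ p ∈ D, p.1 < p.2)
    (hbasic₁ : ∀ p ∈ D, ∀ q ∈ D, p.1 = q.1 → p = q)
    (hbasic₂ : ∀ p ∈ D, ∀ q ∈ D, p.2 = q.2 → p = q)
    (Γ Ω : Set (Λ × Λ))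
    (hΓ : Γ = {p : Λ × Λ | p.1 < p.2 ∧ ¬ ∃ q ∈ D, p.1 = q.1 ∧ p.2 < q.2})
    (hΩ : Ω = {p : Λ × Λ | p.1 < p.2 ∧
      ∃ β δ : Λ, (p.1, β) ∈ D ∧ (p.2, δ) ∈ D ∧ p.2 < β ∧ β < δ}) :
    ((patternSubgroup R Λ Γ).subgroupOf (patternSubgroup R Λ (Γ ∪ Ω))).Normal ∧
      (∀ _ : Finite R,
        ((patternSubgroup R Λ Γ).subgroupOf (patternSubgroup R Λ (Γ ∪ Ω))).index =
          Nat.card R ^ Nat.card Ω) := by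
  classical
  -- basic facts about the patterns
  have hΓΦ : ∀ p ∈ Γ, p.1 < p.2 := by rw [hΓ]; exact fun p hp => hp.1
  have hΩΦ : ∀ p ∈ Ω, p.1 < p.2 := by rw [hΩ]; exact fun p hp => hp.1
  have hΓ₁Φ : ∀ p ∈ Γ ∪ Ω, p.1 < p.2 := fun p hp => hp.elim (hΓΦ p) (hΩΦ p)
  have hGG : comp Γ Γ ⊆ Γ := by
    rintro ⟨a, c⟩ ⟨b, h1, h2⟩
    rw [hΓ] at h1 h2 ⊢
    refine ⟨h1.1.trans h2.1, ?_⟩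
    rintro ⟨q, hq, hq1, hq2⟩
    exact h1.2 ⟨q, hq, hq1, h2.1.trans hq2⟩
  have hOG : comp Ω Γ ⊆ Γ := by
    rintro ⟨a, c⟩ ⟨b, h1, h2⟩
    rw [hΩ] at h1
    rw [hΓ] at h2 ⊢
    obtain ⟨hab, β, δ, haβ, hbδ, hbβ, hβδ⟩ := h1
    refine ⟨hab.trans h2.1, ?_⟩
    rintro ⟨q, hq, hq1, hq2⟩
    have hqβ : q = (a, β) := hbasic₁ q hq (a, β) haβ (by simpa using hq1.symm)
    have hδc : ¬ c < δ := fun hc => h2.2 ⟨(b, δ), hbδ, rfl, hc⟩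
    have : c < β := by rw [hqβ] at hq2; exact hq2
    exact hδc (this.trans hβδ)
  have hGO : comp Γ Ω ⊆ Γ := by
    rintro ⟨a, c⟩ ⟨b, h1, h2⟩
    rw [hΓ] at h1 ⊢
    rw [hΩ] at h2
    refine ⟨h1.1.trans h2.1, ?_⟩
    rintro ⟨q, hq, hq1, hq2⟩
    exact h1.2 ⟨q, hq, hq1, h2.1.trans hq2⟩
  have hOO : comp Ω Ω ⊆ Γ ∪ Ω := by
    rintro ⟨a, c⟩ ⟨b, h1, h2⟩
    rw [hΩ] at h1 h2
    obtain ⟨hab, β, δ, haβ, hbδ, hbβ, hβδ⟩ := h1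
    obtain ⟨hbc, β₂, δ₂, hbβ₂, hcδ₂, hcβ₂, hβ₂δ₂⟩ := h2
    have hδβ₂ : δ = β₂ := by
      have := hbasic₁ (b, δ) hbδ (b, β₂) hbβ₂ rfl
      simpa using this
    by_cases hc : c < β
    · right
      rw [hΩ]
      exact ⟨hab.trans hbc, β, δ₂, haβ, hcδ₂, hc,
        hβδ.trans (by rw [hδβ₂]; exact hβ₂δ₂)⟩
    · left
      rw [hΓ]
      refine ⟨hab.trans hbc, ?_⟩
      rintro ⟨q, hq, hq1, hq2⟩
      have hqβ : q = (a, β) := hbasic₁ q hq (a, β) haβ (by simpa using hq1.symm)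
      rw [hqβ] at hq2
      exact hc hq2
  have h1G : comp (Γ ∪ Ω) Γ ⊆ Γ := by
    rintro ⟨a, c⟩ ⟨b, h1, h2⟩
    rcases h1 with h1 | h1
    · exact hGG ⟨b, h1, h2⟩
    · exact hOG ⟨b, h1, h2⟩
  have hG1 : comp Γ (Γ ∪ Ω) ⊆ Γ := by
    rintro ⟨a, c⟩ ⟨b, h1, h2⟩
    rcases h2 with h2 | h2
    · exact hGG ⟨b, h1, h2⟩
    · exact hGO ⟨b, h1, h2⟩
  have h11 : comp (Γ ∪ Ω) (Γ ∪ Ω) ⊆ Γ ∪ Ω := by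
    rintro ⟨a, c⟩ ⟨b, h1, h2⟩
    rcases h1 with h1 | h1
    · exact Or.inl (hG1 ⟨b, h1, h2⟩)
    · rcases h2 with h2 | h2
      · exact Or.inl (hOG ⟨b, h1, h2⟩)
      · exact hOO ⟨b, h1, h2⟩
  have hdisj : ∀ p ∈ Ω, p ∉ Γ := by
    intro p hp hpΓ
    rw [hΩ] at hp
    rw [hΓ] at hpΓ
    obtain ⟨-, β, δ, hpβ, -, hp2β, -⟩ := hp
    exact hpΓ.2 ⟨(p.1, β), hpβ, rfl, hp2β⟩
  have hΩfin : Ω.Finite := by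
    apply Set.Finite.subset (((D.image Prod.fst) ×ˢ (D.image Prod.fst)).finite_toSet)
    intro p hp
    rw [hΩ] at hp
    obtain ⟨-, β, δ, hpβ, hpδ, -, -⟩ := hp
    simp only [Finset.coe_product, Set.mem_prod, Finset.mem_coe, Finset.mem_image]
    exact ⟨⟨(p.1, β), hpβ, rfl⟩, ⟨(p.2, δ), hpδ, rfl⟩⟩
  -- characterizations
  set H := patternSubgroup R Λ Γ with hH
  set I := patternSubgroup R Λ (Γ ∪ Ω) with hI
  have hHchar : ∀ u : (E R Λ)ˣ, u ∈ H ↔ Pat Γ ((u : E R Λ) - 1) :=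
    pattern_iff hΓΦ hGG
  have hIchar : ∀ u : (E R Λ)ˣ, u ∈ I ↔ Pat (Γ ∪ Ω) ((u : E R Λ) - 1) :=
    pattern_iff hΓ₁Φ h11
  -- normality
  have hnormal : (H.subgroupOf I).Normal := by
    constructor
    intro n hn g
    rw [Subgroup.mem_subgroupOf] at hn ⊢
    have hm : Pat Γ (((n : (E R Λ)ˣ) : E R Λ) - 1) := (hHchar _).mp hn
    have ha : Pat (Γ ∪ Ω) (((g : (E R Λ)ˣ) : E R Λ) - 1) := (hIchar _).mp g.2
    have hb : Pat (Γ ∪ Ω) ((((g : (E R Λ)ˣ)⁻¹ : (E R Λ)ˣ) : E R Λ) - 1) :=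
      (hIchar _).mp (I.inv_mem g.2)
    rw [hHchar]
    have hco : ((g * n * g⁻¹ : ↥I) : (E R Λ)ˣ) =
        (g : (E R Λ)ˣ) * (n : (E R Λ)ˣ) * ((g : (E R Λ)ˣ))⁻¹ := by
      push_cast
      rfl
    rw [hco, Units.val_mul, Units.val_mul,
      conj_sub_one _ _ _ (by rw [← Units.val_mul, mul_inv_cancel, Units.val_one])]
    exact ((hm.add (ha.mul hm h1G)).add (hm.mul hb hG1)).add (ha.mul (hm.mul hb hG1) h1G)
  refine ⟨hnormal, ?_⟩
  intro hfinR
  haveI : Finite ↥Ω := hΩfin.to_subtype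
  -- the entry map on Ω
  let f : ↥I → (↥Ω → R) := fun u ω => ent (((u : (E R Λ)ˣ) : E R Λ) - 1) ω.1.1 ω.1.2
  have hent0 : ∀ {k : E R Λ}, Pat Γ k → ∀ p ∈ Ω, ent k p.1 p.2 = 0 := by
    intro k hk p hp
    by_contra h
    exact hdisj p hp (hk.1 (show p ∈ msupp k from h))
  have key1 : ∀ u v : ↥I, (u : (E R Λ)ˣ)⁻¹ * (v : (E R Λ)ˣ) ∈ H → f u = f v := by
    intro u v huv
    have hk : Pat Γ ((((u : (E R Λ)ˣ)⁻¹ * (v : (E R Λ)ˣ) : (E R Λ)ˣ) : E R Λ) - 1) :=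
      (hHchar _).mp huv
    have hPu : Pat (Γ ∪ Ω) (((u : (E R Λ)ˣ) : E R Λ) - 1) := (hIchar _).mp u.2
    funext ω
    have hv : (((v : (E R Λ)ˣ)) : E R Λ) =
        ((u : (E R Λ)ˣ) : E R Λ) *
          (((u : (E R Λ)ˣ)⁻¹ * (v : (E R Λ)ˣ) : (E R Λ)ˣ) : E R Λ) := by
      rw [← Units.val_mul, mul_inv_cancel_left]
    show ent (((u : (E R Λ)ˣ) : E R Λ) - 1) ω.1.1 ω.1.2 =
      ent (((v : (E R Λ)ˣ) : E R Λ) - 1) ω.1.1 ω.1.2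
    rw [hv, mul_sub_one', ent_add, ent_add,
      hent0 hk ω.1 ω.2, hent0 (hPu.mul hk h1G) ω.1 ω.2, add_zero, add_zero]
  have key2 : ∀ u v : ↥I, f u = f v → (u : (E R Λ)ˣ)⁻¹ * (v : (E R Λ)ˣ) ∈ H := by
    intro u v hfeq
    have hPu : Pat (Γ ∪ Ω) (((u : (E R Λ)ˣ) : E R Λ) - 1) := (hIchar _).mp u.2
    have hPv : Pat (Γ ∪ Ω) (((v : (E R Λ)ˣ) : E R Λ) - 1) := (hIchar _).mp v.2
    have hPc : Pat (Γ ∪ Ω) ((((u : (E R Λ)ˣ)⁻¹ : (E R Λ)ˣ) : E R Λ) - 1) :=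
      (hIchar _).mp (I.inv_mem u.2)
    have hyx : ((v : (E R Λ)ˣ) : E R Λ) - ((u : (E R Λ)ˣ) : E R Λ) =
        (((v : (E R Λ)ˣ) : E R Λ) - 1) - (((u : (E R Λ)ˣ) : E R Λ) - 1) := by
      abel
    have hD : Pat Γ (((v : (E R Λ)ˣ) : E R Λ) - ((u : (E R Λ)ˣ) : E R Λ)) := by
      have hsub : msupp (((v : (E R Λ)ˣ) : E R Λ) - ((u : (E R Λ)ˣ) : E R Λ)) ⊆
          msupp (((v : (E R Λ)ˣ) : E R Λ) - 1) ∪ msupp (((u : (E R Λ)ˣ) : E R Λ) - 1) := by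
        rintro ⟨a, b⟩ hab
        have h1 : ent ((((v : (E R Λ)ˣ) : E R Λ)) - (((u : (E R Λ)ˣ) : E R Λ))) a b ≠ 0 := hab
        rw [hyx, ent_sub] at h1
        by_contra hc
        simp only [Set.mem_union, msupp, Set.mem_setOf_eq, not_or, not_not] at hc
        rw [hc.1, hc.2, sub_zero] at h1
        exact h1 rfl
      constructor
      · rintro ⟨a, b⟩ hab
        have hmem : ((a, b) : Λ × Λ) ∈ Γ ∪ Ω := by
          rcases hsub hab with h | h
          · exact hPv.1 h
          · exact hPu.1 h
        by_cases hΩm : ((a, b) : Λ × Λ) ∈ Ω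
        · exfalso
          have heq := congrFun hfeq ⟨(a, b), hΩm⟩
          have h1 : ent ((((v : (E R Λ)ˣ) : E R Λ)) - (((u : (E R Λ)ˣ) : E R Λ))) a b ≠ 0 := hab
          rw [hyx, ent_sub] at h1
          exact h1 (sub_eq_zero_of_eq heq.symm)
        · rcases hmem with h | h
          · exact h
          · exact absurd h hΩm
      · exact (hPv.2.union hPu.2).subset hsub
    rw [hHchar]
    have hco : (((u : (E R Λ)ˣ)⁻¹ * (v : (E R Λ)ˣ) : (E R Λ)ˣ) : E R Λ) =
        (((u : (E R Λ)ˣ)⁻¹ : (E R Λ)ˣ) : E R Λ) * ((v : (E R Λ)ˣ) : E R Λ) :=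
      Units.val_mul _ _
    rw [hco, inv_mul_sub_one _ ((u : (E R Λ)ˣ) : E R Λ) _
      (by rw [← Units.val_mul, inv_mul_cancel, Units.val_one])]
    exact hD.add (hPc.mul hD h1G)
  -- surjectivity construction
  have key3 : ∀ (r' : Λ × Λ → R) (T : Finset (Λ × Λ)), ↑T ⊆ Ω →
      ∃ u : (E R Λ)ˣ, u ∈ I ∧ ∀ p ∈ T, ent ((u : E R Λ) - 1) p.1 p.2 = r' p := by
    intro r' T
    induction T using Finset.strongInduction with
    | _ T ih =>
      intro hTΩ
      rcases T.eq_empty_or_nonempty with rfl | hne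
      · refine ⟨1, Subgroup.one_mem _, by simp⟩
      · have hBne : (T.image Prod.snd).Nonempty := hne.image _
        set b0 := (T.image Prod.snd).max' hBne with hb0
        have hCne : (T.filter (fun q => q.2 = b0)).Nonempty := by
          obtain ⟨q, hq, hq2⟩ := Finset.mem_image.mp ((T.image Prod.snd).max'_mem hBne)
          exact ⟨q, Finset.mem_filter.mpr ⟨hq, hq2⟩⟩
        have hAne : ((T.filter (fun q => q.2 = b0)).image Prod.fst).Nonempty := hCne.image _
        obtain ⟨τ, hτC, hτ1⟩ := Finset.mem_image.mp
          (Finset.min'_mem ((T.filter (fun q => q.2 = b0)).image Prod.fst) hAne)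
        have hτT : τ ∈ T := (Finset.mem_filter.mp hτC).1
        have hτ2 : τ.2 = b0 := (Finset.mem_filter.mp hτC).2
        have hmaxT : ∀ q ∈ T, q ≠ τ → q.2 < τ.2 ∨ (q.2 = τ.2 ∧ τ.1 < q.1) := by
          intro q hq hqτ
          have hle : q.2 ≤ b0 := Finset.le_max' _ _ (Finset.mem_image_of_mem _ hq)
          rcases lt_or_eq_of_le hle with h | h
          · left; rw [hτ2]; exact h
          · right
            refine ⟨by rw [hτ2]; exact h, ?_⟩
            have hqC : q ∈ T.filter (fun q => q.2 = b0) := Finset.mem_filter.mpr ⟨hq, h⟩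
            have hle2 : τ.1 ≤ q.1 := by
              rw [hτ1]
              exact Finset.min'_le _ _ (Finset.mem_image_of_mem _ hqC)
            rcases lt_or_eq_of_le hle2 with h' | h'
            · exact h'
            · exact absurd (Prod.ext_iff.mpr ⟨h'.symm, h.trans hτ2.symm⟩) hqτ
        have hτΩ : (τ.1, τ.2) ∈ Ω := by
          have := hTΩ hτT
          simpa using this
        have hτlt : τ.1 < τ.2 := by
          have := hΩΦ _ hτΩ
          simpa using this
        obtain ⟨u₀, hu₀I, hu₀e⟩ := ih (T.erase τ) (Finset.erase_ssubset hτT)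
          (fun p hp => hTΩ (Finset.erase_subset τ T hp))
        have hPu₀ : Pat (Γ ∪ Ω) ((u₀ : E R Λ) - 1) := (hIchar _).mp hu₀I
        set s := r' τ - ent ((u₀ : E R Λ) - 1) τ.1 τ.2 with hs
        refine ⟨u₀ * rootUnit hτlt s,
          Subgroup.mul_mem _ hu₀I (rootUnit_mem hτlt (Or.inr hτΩ) s), ?_⟩
        have hval : ((u₀ * rootUnit hτlt s : (E R Λ)ˣ) : E R Λ) - 1 =
            ((u₀ : E R Λ) - 1) + elt τ.1 τ.2 s + ((u₀ : E R Λ) - 1) * elt τ.1 τ.2 s := by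
          rw [Units.val_mul, rootUnit_val, mul_sub_one', one_add_sub_one]
        intro p hp
        rw [hval, ent_add, ent_add, ent_elt, ent_mul_elt]
        rcases eq_or_ne p τ with rfl | hpτ
        · have h3 : ent ((u₀ : E R Λ) - 1) p.1 p.1 = 0 := by
            by_contra h
            have hm : ((p.1, p.1) : Λ × Λ) ∈ msupp ((u₀ : E R Λ) - 1) := h
            exact absurd (hΓ₁Φ _ (hPu₀.1 hm)) (lt_irrefl p.1)
          rw [if_pos ⟨rfl, rfl⟩, if_pos rfl, h3, zero_mul, add_zero, hs]
          abel
        · have h2 : ¬(p.1 = τ.1 ∧ p.2 = τ.2) := fun h => hpτ (Prod.ext_iff.mpr h)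
          have h3 : (if p.2 = τ.2 then ent ((u₀ : E R Λ) - 1) p.1 τ.1 * s else 0) = 0 := by
            split_ifs with h
            · have hz : ent ((u₀ : E R Λ) - 1) p.1 τ.1 = 0 := by
                by_contra hcon
                have hm : ((p.1, τ.1) : Λ × Λ) ∈ msupp ((u₀ : E R Λ) - 1) := hcon
                have hlt1 : p.1 < τ.1 := hΓ₁Φ _ (hPu₀.1 hm)
                rcases hmaxT p hp hpτ with hcase | hcase
                · rw [h] at hcase; exact absurd hcase (lt_irrefl _)
                · exact absurd hlt1 (not_lt.mpr (le_of_lt hcase.2))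
              rw [hz, zero_mul]
            · rfl
          rw [if_neg h2, h3, add_zero, add_zero]
          exact hu₀e p (Finset.mem_erase.mpr ⟨hpτ, hp⟩)
  have key3' : ∀ g : ↥Ω → R, ∃ u : ↥I, f u = g := by
    intro g
    obtain ⟨u, huI, hue⟩ := key3 (fun p => if h : p ∈ Ω then g ⟨p, h⟩ else 0) hΩfin.toFinset
      (by rw [Set.Finite.coe_toFinset])
    refine ⟨⟨u, huI⟩, ?_⟩
    funext ω
    have h1 := hue ω.1 (hΩfin.mem_toFinset.mpr ω.2)
    show ent ((u : E R Λ) - 1) ω.1.1 ω.1.2 = g ω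
    rw [h1, dif_pos ω.2]
  -- the bijection with the quotient
  let F : (↥I ⧸ H.subgroupOf I) → (↥Ω → R) :=
    Quotient.lift f (by
      intro u v h
      apply key1
      have hm := QuotientGroup.leftRel_apply.mp h
      rw [Subgroup.mem_subgroupOf] at hm
      simpa using hm)
  have hFbij : Function.Bijective F := by
    constructor
    · intro q1 q2
      refine Quotient.inductionOn₂ q1 q2 ?_
      intro u v h
      apply Quotient.sound
      refine QuotientGroup.leftRel_apply.mpr ?_
      rw [Subgroup.mem_subgroupOf]
      have := key2 u v h
      simpa using this
    · intro g
      obtain ⟨u, hu⟩ := key3' g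
      exact ⟨Quotient.mk _ u, hu⟩
  have hidx : (H.subgroupOf I).index = Nat.card (↥I ⧸ H.subgroupOf I) := rfl
  rw [hidx, Nat.card_congr (Equiv.ofBijective F hFbij), Nat.card_fun]


end McLain
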